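/- Let λ₁,...,λₙ > 0 and λ ≥ (1/n)∑_{i=1}^n λᵢ. Then the function u ↦ [(1-(1-λ)u)/n]·∑_{i=1}^n 1/(1-(1-λᵢ)u) is increasing in u ∈ (0,1). Equivalently, for u ∈ (0,1), ((1-λ)u/(1-(1-λ)u)) · ∑_{i=1}^n 1/(1-(1-λᵢ)u) ≤ ∑_{i=1}^n (1-λᵢ)u/(1-(1-λᵢ)u)². -/

import Mathlib

open Finset

lemma cheb {n : ℕ} (B : Fin n → ℝ) (hB : ∀ i, 0 < B i) :
    (n:ℝ) * ∑ i, 1 / B i ≤ (∑ i, B i) * ∑ i, 1 / (B i)^2 := by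
  have key : 0 ≤ ∑ i, ∑ j, (B i - B j) * (1/(B j)^2 - 1/(B i)^2) := by
    apply Finset.sum_nonneg; intro i _
    apply Finset.sum_nonneg; intro j _
    rcases le_total (B i) (B j) with h | h
    · have h2 : 1/(B j)^2 ≤ 1/(B i)^2 :=
        one_div_le_one_div_of_le (pow_pos (hB i) 2) (pow_le_pow_left₀ (hB i).le h 2)
      nlinarith [mul_nonneg (by linarith : (0:ℝ) ≤ B j - B i) (by linarith : (0:ℝ) ≤ 1/(B i)^2 - 1/(B j)^2)]
    · have h2 : 1/(B i)^2 ≤ 1/(B j)^2 :=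
        one_div_le_one_div_of_le (pow_pos (hB j) 2) (pow_le_pow_left₀ (hB j).le h 2)
      exact mul_nonneg (by linarith) (by linarith)
  have hBC : ∑ i, B i * (1/(B i)^2) = ∑ i, 1 / B i := by
    apply Finset.sum_congr rfl; intro i _
    have := (hB i).ne'
    field_simp
  have expand : ∑ i, ∑ j, (B i - B j) * (1/(B j)^2 - 1/(B i)^2)
      = 2 * ((∑ i, B i) * ∑ i, 1/(B i)^2) - 2 * ((n:ℝ) * ∑ i, 1 / B i) := by
    simp only [sub_mul, mul_sub, Finset.sum_sub_distrib, ← Finset.mul_sum, ← Finset.sum_mul,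
      Finset.sum_const, Finset.card_univ, Fintype.card_fin, nsmul_eq_mul]
    have e1 : ∑ x : Fin n, B x * ((n:ℝ) * (1 / B x ^ 2)) = (n:ℝ) * ∑ x : Fin n, B x * (1 / B x ^ 2) := by
      rw [Finset.mul_sum]; exact Finset.sum_congr rfl fun i _ => by ring
    rw [e1, hBC]
    simp only [one_div, inv_pow]
    ring
  linarith

theorem series_po_relative_ageing_homog {n : ℕ} (lam : Fin n → ℝ) (l : ℝ)
    (hlam : ∀ i, 0 < lam i)
    (hl : l ≥ (1 / n) * ∑ i, lam i) :
    MonotoneOn (fun u : ℝ =>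
      (1 - (1 - l) * u) / n * ∑ i, 1 / (1 - (1 - lam i) * u))
      (Set.Ioo (0:ℝ) 1) ∧
    ∀ u : ℝ, u ∈ Set.Ioo (0:ℝ) 1 →
      (1 - l) * u / (1 - (1 - l) * u) * ∑ i, 1 / (1 - (1 - lam i) * u) ≤
        ∑ i, (1 - lam i) * u / (1 - (1 - lam i) * u) ^ 2 := by
  rcases Nat.eq_zero_or_pos n with hn | hn
  · subst hn
    constructor
    · simp only [Finset.univ_eq_empty, Finset.sum_empty, mul_zero]
      exact monotoneOn_const
    · intro u _
      simp
  -- main case : n ≥ 1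
  have hn' : (0:ℝ) < n := by exact_mod_cast hn
  have : Nonempty (Fin n) := ⟨⟨0, hn⟩⟩
  have hsumpos : 0 < ∑ i, lam i := Finset.sum_pos (fun i _ => hlam i) Finset.univ_nonempty
  have hl0 : 0 < l := lt_of_lt_of_le (by positivity) hl
  have hnl : ∑ i, lam i ≤ (n:ℝ) * l := by
    have := mul_le_mul_of_nonneg_left hl hn'.le
    have e : (n:ℝ) * ((1/n) * ∑ i, lam i) = ∑ i, lam i := by field_simp
    linarith [e ▸ this]
  have hd : ∀ x ∈ Set.Ioo (0:ℝ) 1, ∀ i, 0 < 1 - (1 - lam i) * x := by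
    intro x hx i
    nlinarith [mul_pos (hlam i) hx.1, hx.1, hx.2]
  have hD : ∀ x ∈ Set.Ioo (0:ℝ) 1, 0 < 1 - (1 - l) * x := by
    intro x hx
    nlinarith [mul_pos hl0 hx.1, hx.1, hx.2]
  -- the central inequality
  have hmain : ∀ x ∈ Set.Ioo (0:ℝ) 1,
      (1 - l) * (∑ i, 1 / (1 - (1 - lam i) * x)) ≤
        (1 - (1 - l) * x) * ∑ i, (1 - lam i) / (1 - (1 - lam i) * x) ^ 2 := by
    intro x hx
    have hdx := hd x hx
    have hDx := hD x hx
    have hQpos : (0:ℝ) ≤ ∑ i, 1 / (1 - (1 - lam i) * x) ^ 2 :=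
      Finset.sum_nonneg fun i _ => by positivity
    have hcheb := cheb (fun i => 1 - (1 - lam i) * x) hdx
    have hsd : ∑ i, (1 - (1 - lam i) * x) = (n:ℝ) * (1 - x) + (∑ i, lam i) * x := by
      rw [Finset.sum_congr rfl (fun i _ => by ring :
        ∀ i ∈ Finset.univ, (1 - (1 - lam i) * x) = (1 - x) + lam i * x),
        Finset.sum_add_distrib, ← Finset.sum_mul]
      simp [Finset.card_univ, mul_comm]
      ring
    have hsum_d : ∑ i, (1 - (1 - lam i) * x) ≤ (n:ℝ) * (1 - (1 - l) * x) := by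
      rw [hsd]
      nlinarith [mul_le_mul_of_nonneg_right hnl hx.1.le]
    have key : (∑ i, 1 / (1 - (1 - lam i) * x)) ≤
        (1 - (1 - l) * x) * ∑ i, 1 / (1 - (1 - lam i) * x) ^ 2 := by
      have h1 : (n:ℝ) * ∑ i, 1 / (1 - (1 - lam i) * x) ≤
          ((n:ℝ) * (1 - (1 - l) * x)) * ∑ i, 1 / (1 - (1 - lam i) * x) ^ 2 :=
        le_trans hcheb (mul_le_mul_of_nonneg_right hsum_d hQpos)
      nlinarith [h1]
    have hTu : x * ∑ i, (1 - lam i) / (1 - (1 - lam i) * x) ^ 2 =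
        (∑ i, 1 / (1 - (1 - lam i) * x) ^ 2) - ∑ i, 1 / (1 - (1 - lam i) * x) := by
      rw [Finset.mul_sum, ← Finset.sum_sub_distrib]
      apply Finset.sum_congr rfl
      intro i _
      have h0 := (hdx i).ne'
      field_simp
      ring
    -- ((1-l)*S - D*T)*x = S - D*Q ≤ 0
    nlinarith [hTu, key, hx.1,
      mul_pos hx.1 hx.1]
  have hder : ∀ x ∈ Set.Ioo (0:ℝ) 1, HasDerivAt (fun u : ℝ =>
      (1 - (1 - l) * u) / n * ∑ i, 1 / (1 - (1 - lam i) * u))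
      (-(1 - l)/n * (∑ i, 1 / (1 - (1 - lam i) * x)) +
        (1 - (1 - l) * x)/n * ∑ i, (1 - lam i)/(1 - (1 - lam i) * x)^2) x := by
    intro x hx
    have h1 : HasDerivAt (fun u:ℝ => (1 - (1 - l) * u)/n) (-(1 - l)/n) x := by
      have h : HasDerivAt (fun u:ℝ => 1 - (1 - l) * u) (-(1 - l)) x := by
        simpa using ((hasDerivAt_id x).const_mul (1 - l)).const_sub 1
      exact h.div_const n
    have h2 : HasDerivAt (fun u:ℝ => ∑ i, 1 / (1 - (1 - lam i) * u))
        (∑ i, (1 - lam i)/(1 - (1 - lam i) * x)^2) x := by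
      apply HasDerivAt.fun_sum
      intro i _
      have hi : HasDerivAt (fun u:ℝ => 1 - (1 - lam i) * u) (-(1 - lam i)) x := by
        simpa using ((hasDerivAt_id x).const_mul (1 - lam i)).const_sub 1
      have h3 := hi.inv (hd x hx i).ne'
      simpa [one_div, neg_neg, Pi.inv_def] using h3
    exact h1.mul h2
  constructor
  · apply monotoneOn_of_deriv_nonneg (convex_Ioo 0 1)
    · exact fun x hx => (hder x hx).differentiableAt.continuousAt.continuousWithinAt
    · rw [interior_Ioo]
      exact fun x hx => (hder x hx).differentiableAt.differentiableWithinAt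
    · intro x hx
      rw [interior_Ioo] at hx
      rw [(hder x hx).deriv]
      have e : -(1 - l)/n * (∑ i, 1 / (1 - (1 - lam i) * x)) +
          (1 - (1 - l) * x)/n * ∑ i, (1 - lam i)/(1 - (1 - lam i) * x)^2
          = ((1 - (1 - l) * x) * (∑ i, (1 - lam i)/(1 - (1 - lam i) * x)^2)
            - (1 - l) * ∑ i, 1 / (1 - (1 - lam i) * x)) / n := by ring
      rw [e]
      exact div_nonneg (by linarith [hmain x hx]) hn'.le
  · intro u hu
    have hDu := hD u hu
    rw [div_mul_eq_mul_div, div_le_iff₀ hDu]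
    have hx2 : ∑ i, (1 - lam i) * u / (1 - (1 - lam i) * u) ^ 2 =
        u * ∑ i, (1 - lam i) / (1 - (1 - lam i) * u) ^ 2 := by
      rw [Finset.mul_sum]; exact Finset.sum_congr rfl fun i _ => by ring
    rw [hx2]
    have := mul_le_mul_of_nonneg_right (hmain u hu) hu.1.le
    nlinarith [this]
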